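/- Let 0 < ρ < 1/2, 0 < α < 1, M ≥ 1, and let (X_n) be a sequence of positive reals with X_0, X_1 ≤ M and X_{n+1} < ρ(max(1,X_n)^α + max(1,X_{n-1})^α) for n ≥ 1. Then limsup_{n→∞} X_n ≤ 2ρ. -/

import Mathlib

open Filter Real

theorem two_level_iteration_limsup (ρ α M : ℝ) (X : ℕ → ℝ)
    (hρ0 : 0 < ρ) (hρ : ρ < 1 / 2) (hα0 : 0 < α) (hα : α < 1) (hM : 1 ≤ M)
    (hXpos : ∀ n, 0 < X n)
    (hX0 : X 0 ≤ M) (hX1 : X 1 ≤ M)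
    (hrec : ∀ n : ℕ, 1 ≤ n →
      X (n + 1) < ρ * ((max 1 (X n)) ^ α + (max 1 (X (n - 1))) ^ α)) :
    Filter.limsup X Filter.atTop ≤ 2 * ρ := by
  set Y : ℕ → ℝ := fun n => max 1 (X n) with hYdef
  have hY1 : ∀ n, (1:ℝ) ≤ Y n := fun n => le_max_left _ _
  have hYpos : ∀ n, (0:ℝ) ≤ Y n := fun n => le_trans zero_le_one (hY1 n)
  have h2ρ1 : 2 * ρ < 1 := by linarith
  -- key step
  have hstep : ∀ n, 1 ≤ n → Y (n+1) ≤ (max (Y n) (Y (n-1))) ^ α := by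
    intro n hn
    set W := max (Y n) (Y (n-1)) with hW
    have hW1 : (1:ℝ) ≤ W := le_trans (hY1 n) (le_max_left _ _)
    have hWa : (1:ℝ) ≤ W ^ α := Real.one_le_rpow hW1 hα0.le
    have h1 : Y n ^ α ≤ W ^ α := Real.rpow_le_rpow (hYpos n) (le_max_left _ _) hα0.le
    have h2 : Y (n-1) ^ α ≤ W ^ α := Real.rpow_le_rpow (hYpos (n-1)) (le_max_right _ _) hα0.le
    have hx := hrec n hn
    have hXb : X (n+1) ≤ W ^ α := by nlinarith
    exact max_le hWa hXb
  set Z : ℕ → ℝ := fun n => max (Y n) (Y (n+1)) with hZdef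
  have hZ1 : ∀ n, (1:ℝ) ≤ Z n := fun n => le_trans (hY1 n) (le_max_left _ _)
  have hYZ : ∀ n, Y n ≤ Z n := fun n => le_max_left _ _
  have hZstep : ∀ n, Z (n+2) ≤ Z n ^ α := by
    intro n
    have hZa : (1:ℝ) ≤ Z n ^ α := Real.one_le_rpow (hZ1 n) hα0.le
    have h2 : Y (n+2) ≤ Z n ^ α := by
      have := hstep (n+1) (by omega)
      simpa [max_comm (Y (n+1)) (Y n)] using this
    have hZaZ : Z n ^ α ≤ Z n := by
      calc Z n ^ α ≤ Z n ^ (1:ℝ) :=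
            Real.rpow_le_rpow_of_exponent_le (hZ1 n) hα.le
        _ = Z n := Real.rpow_one _
    have h3 : Y (n+3) ≤ Z n ^ α := by
      have h := hstep (n+2) (by omega)
      rw [show n + 2 - 1 = n + 1 by omega] at h
      refine h.trans ?_
      refine Real.rpow_le_rpow (le_trans (hYpos (n+2)) (le_max_left _ _)) ?_ hα0.le
      exact max_le (h2.trans hZaZ) (le_max_right (Y n) (Y (n+1)))
    exact max_le h2 h3
  have hY0M : Y 0 ≤ M := max_le hM hX0
  have hY1M : Y 1 ≤ M := max_le hM hX1
  have hY2M : Y 2 ≤ M := by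
    have h := hstep 1 le_rfl
    simp only [Nat.sub_self] at h
    refine h.trans ?_
    calc (max (Y 1) (Y 0)) ^ α ≤ M ^ α := by
          refine Real.rpow_le_rpow (le_trans (hYpos 1) (le_max_left _ _))
            (max_le hY1M hY0M) hα0.le
      _ ≤ M ^ (1:ℝ) := Real.rpow_le_rpow_of_exponent_le hM hα.le
      _ = M := Real.rpow_one _
  -- Z(2k+i) ≤ M^(α^k)
  have hZbound : ∀ k, Z (2*k) ≤ M ^ (α ^ k) ∧ Z (2*k+1) ≤ M ^ (α ^ k) := by
    intro k
    induction k with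
    | zero =>
      simp only [Nat.mul_zero, pow_zero, Real.rpow_one]
      exact ⟨max_le hY0M hY1M, max_le hY1M hY2M⟩
    | succ k ih =>
      have hαk : (0:ℝ) < α ^ k := pow_pos hα0 k
      have key : ∀ m, Z m ≤ M ^ (α ^ k) → Z (m+2) ≤ M ^ (α ^ (k+1)) := by
        intro m hm
        calc Z (m+2) ≤ Z m ^ α := hZstep m
          _ ≤ (M ^ (α ^ k)) ^ α := Real.rpow_le_rpow
              (le_trans zero_le_one (hZ1 m)) hm hα0.le
          _ = M ^ (α ^ (k+1)) := by
              rw [← Real.rpow_natCast, ← Real.rpow_mul (by linarith : (0:ℝ) ≤ M)]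
              norm_num [pow_succ]
      exact ⟨key (2*k) ih.1, key (2*k+1) ih.2⟩
  -- Y m ≤ M^(α^(m/2)) eventually small
  have hYbound : ∀ m, Y m ≤ M ^ (α ^ (m / 2)) := by
    intro m
    rcases Nat.even_or_odd m with ⟨k, hk⟩ | ⟨k, hk⟩
    · have := (hZbound k).1
      have hm : m = 2*k := by omega
      have hd : m / 2 = k := by omega
      rw [hm, hd] at *
      exact le_trans (hYZ (2*k)) this
    · have := (hZbound k).2
      have hm : m = 2*k+1 := by omega
      have hd : m / 2 = k := by omega
      rw [hm, hd] at *
      exact le_trans (hYZ (2*k+1)) this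
  refine le_of_forall_pos_le_add ?_
  intro ε hε
  set δ : ℝ := ε / (2 * ρ) with hδdef
  have hδ0 : 0 < δ := div_pos hε (by linarith)
  -- find K with M^(α^K) ≤ 1 + δ
  have htend : Tendsto (fun k : ℕ => M ^ (α ^ k)) atTop (nhds 1) := by
    have h1 : Tendsto (fun k : ℕ => (α : ℝ) ^ k) atTop (nhds 0) :=
      tendsto_pow_atTop_nhds_zero_of_lt_one hα0.le hα
    have h2 : ContinuousAt (fun x : ℝ => M ^ x) 0 :=
      Real.continuousAt_const_rpow (by linarith)
    have := h2.tendsto.comp h1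
    simpa [Function.comp_def] using this
  have hK : ∃ K, M ^ (α ^ K) ≤ 1 + δ := by
    have := htend.eventually_le_const (by linarith : (1:ℝ) < 1 + δ)
    exact (this.exists).imp (fun K h => h)
  obtain ⟨K, hKB⟩ := hK
  have hYsmall : ∀ m, 2*K ≤ m → Y m ≤ 1 + δ := by
    intro m hm
    have hK2 : K ≤ m / 2 := by omega
    have : M ^ (α ^ (m/2)) ≤ M ^ (α ^ K) := by
      refine Real.rpow_le_rpow_of_exponent_le hM ?_
      exact pow_le_pow_of_le_one hα0.le hα.le hK2
    exact le_trans (hYbound m) (le_trans this hKB)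
  have hXev : ∀ᶠ n in atTop, X n ≤ 2 * ρ + ε := by
    filter_upwards [eventually_ge_atTop (2*K + 2)] with n hn
    obtain ⟨m, rfl⟩ : ∃ m, n = m + 1 := ⟨n - 1, by omega⟩
    have hm1 : 1 ≤ m := by omega
    have hx := hrec m hm1
    have hYm : Y m ≤ 1 + δ := hYsmall m (by omega)
    have hYm1 : Y (m-1) ≤ 1 + δ := hYsmall (m-1) (by omega)
    have hb : ∀ a : ℝ, 0 ≤ a → a ≤ 1 + δ → a ^ α ≤ 1 + δ := by
      intro a ha hle
      calc a ^ α ≤ (1 + δ) ^ α := Real.rpow_le_rpow ha hle hα0.le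
        _ ≤ (1 + δ) ^ (1:ℝ) :=
            Real.rpow_le_rpow_of_exponent_le (by linarith) hα.le
        _ = 1 + δ := Real.rpow_one _
    have h1 : Y m ^ α ≤ 1 + δ := hb _ (hYpos m) hYm
    have h2 : Y (m-1) ^ α ≤ 1 + δ := hb _ (hYpos (m-1)) hYm1
    have hδε : 2 * ρ * (1 + δ) = 2 * ρ + ε := by
      rw [hδdef, mul_add, mul_one, mul_div_assoc', mul_comm (2*ρ) ε, mul_div_assoc,
        div_self (show (2*ρ) ≠ 0 by positivity), mul_one]
    nlinarith
  have hcb : IsCoboundedUnder (· ≤ ·) atTop X :=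
    isCoboundedUnder_le_of_le atTop (x := 0) (fun n => (hXpos n).le)
  exact limsup_le_of_le hcb hXev
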